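/- For each s with 1 ≤ s ≤ N-1 and q a primitive N-th root of unity, the sum β_s = Σ_{i=0}^{s} q^{i·s} · binom_q(N-1-s+i, i) equals 0. -/

import Mathlib

noncomputable section

/-- The q-integer `[k]_q = 1 + q + ... + q^(k-1)`. -/
def qInt (q : ℂ) (k : ℕ) : ℂ := ∑ i ∈ Finset.range k, q ^ i

/-- The q-factorial `[k]_q! = [1]_q [2]_q ⋯ [k]_q`. -/
def qFac (q : ℂ) (k : ℕ) : ℂ := ∏ i ∈ Finset.range k, qInt q (i + 1)

/-- The q-binomial coefficient `binom_q(n, k) = [n]_q! / ([k]_q! [n-k]_q!)`. -/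
def qBinom (q : ℂ) (n k : ℕ) : ℂ := qFac q n / (qFac q k * qFac q (n - k))

namespace BetaAux

variable {N : ℕ} {q : ℂ}

lemma qInt_ne_zero (hN : N.Prime) (hq : IsPrimitiveRoot q N) {k : ℕ}
    (h1 : 1 ≤ k) (h2 : k < N) : qInt q k ≠ 0 := by
  have hgeom : qInt q k * (q - 1) = q ^ k - 1 := geom_sum_mul q k
  have hk1 : q ^ k ≠ 1 := hq.pow_ne_one_of_pos_of_lt (by omega) h2
  intro h0
  rw [h0, zero_mul] at hgeom
  exact hk1 (by linear_combination -hgeom)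

lemma qInt_N_eq_zero (hN : N.Prime) (hq : IsPrimitiveRoot q N) : qInt q N = 0 := by
  have hgeom : qInt q N * (q - 1) = q ^ N - 1 := geom_sum_mul q N
  have hpow : q ^ N = 1 := hq.pow_eq_one
  have hq1 : q - 1 ≠ 0 := sub_ne_zero.mpr (hq.ne_one hN.one_lt)
  have h0 : qInt q N * (q - 1) = 0 := by rw [hgeom, hpow, sub_self]
  rcases mul_eq_zero.mp h0 with h | h
  · exact h
  · exact absurd h hq1

lemma qFac_ne_zero (hN : N.Prime) (hq : IsPrimitiveRoot q N) {k : ℕ}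
    (h2 : k < N) : qFac q k ≠ 0 := by
  rw [qFac, Finset.prod_ne_zero_iff]
  intro i hi
  simp only [Finset.mem_range] at hi
  exact qInt_ne_zero hN hq (by omega) (by omega)

lemma qFac_succ (m : ℕ) : qFac q (m + 1) = qFac q m * qInt q (m + 1) :=
  Finset.prod_range_succ _ _

lemma qInt_add (a b : ℕ) : qInt q (a + b) = qInt q a + q ^ a * qInt q b := by
  simp [qInt, Finset.sum_range_add, pow_add, Finset.mul_sum]

lemma qBinom_zero (hN : N.Prime) (hq : IsPrimitiveRoot q N) {n : ℕ}
    (h : n < N) : qBinom q n 0 = 1 := by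
  have h0 : qFac q 0 = 1 := by simp [qFac]
  rw [qBinom, Nat.sub_zero, h0, one_mul, div_self (qFac_ne_zero hN hq h)]

lemma qPascal (hN : N.Prime) (hq : IsPrimitiveRoot q N) {n k : ℕ}
    (hk1 : 1 ≤ k) (hkn : k ≤ n) (hnN : n + 1 ≤ N) :
    qBinom q (n + 1) k = q ^ (n + 1 - k) * qBinom q n (k - 1) + qBinom q n k := by
  obtain ⟨j, rfl⟩ : ∃ j, k = j + 1 := ⟨k - 1, by omega⟩
  have hsub : n + 1 - (j + 1) = n - j := by omega
  have hsub2 : n - (j + 1) = n - j - 1 := by omega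
  have hsub3 : j + 1 - 1 = j := by omega
  have hnj : n - j = (n - j - 1) + 1 := by omega
  have e1 : qFac q (n + 1) = qFac q n * qInt q (n + 1) := qFac_succ n
  have e2 : qFac q (j + 1) = qFac q j * qInt q (j + 1) := qFac_succ j
  have e3 : qFac q (n - j) = qFac q (n - j - 1) * qInt q (n - j) := by
    rw [hnj]; exact qFac_succ _
  have edec : qInt q (n + 1) = qInt q (n - j) + q ^ (n - j) * qInt q (j + 1) := by
    have : n + 1 = (n - j) + (j + 1) := by omega
    rw [this, qInt_add]
  have hA : qFac q j ≠ 0 := qFac_ne_zero hN hq (by omega)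
  have hB : qFac q (n - j - 1) ≠ 0 := qFac_ne_zero hN hq (by omega)
  have hC : qInt q (j + 1) ≠ 0 := qInt_ne_zero hN hq (by omega) (by omega)
  have hD : qInt q (n - j) ≠ 0 := qInt_ne_zero hN hq (by omega) (by omega)
  rw [qBinom, qBinom, qBinom, hsub, hsub2, hsub3, e1, e2, e3, edec]
  field_simp
  ring

lemma hockey (hN : N.Prime) (hq : IsPrimitiveRoot q N) :
    ∀ (k m : ℕ), m + k + 1 < N →
      ∑ i ∈ Finset.range (k + 1), q ^ ((m + 1) * (k - i)) * qBinom q (m + i) i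
        = qBinom q (m + k + 1) k := by
  intro k
  induction k with
  | zero =>
    intro m hm
    simp [qBinom_zero hN hq (show m < N by omega),
      qBinom_zero hN hq (show m + 0 + 1 < N by omega)]
  | succ k ih =>
    intro m hm
    rw [Finset.sum_range_succ]
    have hstep : ∀ i ∈ Finset.range (k + 1),
        q ^ ((m + 1) * (k + 1 - i)) * qBinom q (m + i) i
          = q ^ (m + 1) * (q ^ ((m + 1) * (k - i)) * qBinom q (m + i) i) := by
      intro i hi
      simp only [Finset.mem_range] at hi
      have he : (m + 1) * (k + 1 - i) = (m + 1) + (m + 1) * (k - i) := by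
        have h1 : k + 1 - i = (k - i) + 1 := by omega
        rw [h1]; ring
      rw [he, pow_add]; ring
    rw [Finset.sum_congr rfl hstep, ← Finset.mul_sum, ih m (by omega)]
    have hp := qPascal hN hq (n := m + k + 1) (k := k + 1)
      (by omega) (by omega) (by omega)
    have h1 : m + k + 1 + 1 - (k + 1) = m + 1 := by omega
    have h2 : k + 1 - 1 = k := by omega
    have h3 : m + (k + 1) + 1 = m + k + 1 + 1 := by omega
    rw [h1, h2] at hp
    have h4 : m + (k + 1) = m + k + 1 := by omega
    rw [h3, hp, h4]
    simp

end BetaAux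

open BetaAux in
/-- For `1 ≤ s ≤ N-1`, the sum `β_s = ∑_{i=0}^{s} q^{i·s} binom_q(N-1-s+i, i)` vanishes. -/
theorem betaSum_eq_zero (N : ℕ) (hN : N.Prime) (q : ℂ) (hq : IsPrimitiveRoot q N)
    (s : ℕ) (hs1 : 1 ≤ s) (hs2 : s ≤ N - 1) :
    ∑ i ∈ Finset.range (s + 1), q ^ (i * s) * qBinom q (N - 1 - s + i) i = 0 := by
  have hN2 : 2 ≤ N := hN.two_le
  set m := N - 1 - s with hm
  have hmN : s + m + 1 = N := by omega
  -- rewrite the weights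
  have hw : ∀ i ∈ Finset.range (s + 1),
      q ^ (i * s) * qBinom q (m + i) i
        = q ^ (s * s) * (q ^ ((m + 1) * (s - i)) * qBinom q (m + i) i) := by
    intro i hi
    simp only [Finset.mem_range] at hi
    obtain ⟨d, rfl⟩ : ∃ d, s = i + d := ⟨s - i, by omega⟩
    have h1 : i + d - i = d := by omega
    have h2 : (i + d) * (i + d) + (m + 1) * d = i * (i + d) + N * d := by
      rw [← hmN]; ring
    have h3 : q ^ ((i + d) * (i + d)) * q ^ ((m + 1) * d)
        = q ^ (i * (i + d)) * (q ^ N) ^ d := by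
      rw [← pow_add, ← pow_mul, ← pow_add, h2]
    rw [h1, ← mul_assoc, h3, hq.pow_eq_one, one_pow, mul_one]
  rw [Finset.sum_congr rfl hw, ← Finset.mul_sum]
  -- split off the last term (i = s)
  rw [Finset.sum_range_succ]
  have hlast : (m + 1) * (s - s) = 0 := by simp
  -- the partial sum up to s-1
  obtain ⟨t, rfl⟩ : ∃ t, s = t + 1 := ⟨s - 1, by omega⟩
  have hinner : ∀ i ∈ Finset.range (t + 1),
      q ^ ((m + 1) * (t + 1 - i)) * qBinom q (m + i) i
        = q ^ (m + 1) * (q ^ ((m + 1) * (t - i)) * qBinom q (m + i) i) := by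
    intro i hi
    simp only [Finset.mem_range] at hi
    have he : (m + 1) * (t + 1 - i) = (m + 1) + (m + 1) * (t - i) := by
      have h1 : t + 1 - i = (t - i) + 1 := by omega
      rw [h1]; ring
    rw [he, pow_add]; ring
  rw [Finset.sum_congr rfl hinner, ← Finset.mul_sum,
    hockey hN hq t m (by omega)]
  -- now: q^(s*s) * (q^(m+1) * qBinom (m+t+1) t + q^0 * qBinom (m+t+1) (t+1)) = 0
  have hp := qPascal hN hq (n := m + t + 1) (k := t + 1)
    (by omega) (by omega) (by omega)
  have h1 : m + t + 1 + 1 - (t + 1) = m + 1 := by omega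
  have h2 : t + 1 - 1 = t := by omega
  rw [h1, h2] at hp
  have hNz : qBinom q (m + t + 1 + 1) (t + 1) = 0 := by
    have hfac : qFac q (m + t + 1 + 1) = 0 := by
      rw [qFac_succ]
      have : m + t + 1 + 1 = N := by omega
      rw [this, qInt_N_eq_zero hN hq, mul_zero]
    rw [qBinom, hfac, zero_div]
  have h5 : m + (t + 1) = m + t + 1 := by omega
  rw [hlast, pow_zero, one_mul, h5, ← hp, hNz, mul_zero]
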